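/- Under the feature-label strategy with a Bayes optimal classifier f on P_α = αP* + (1−α)P₀, the success S(α) = Pr_{x∼P*}[f(x)=y*] satisfies S(α) ≥ 1 − ((1−α)/α) · E_{x∼P*}[Δ_x · P₀(x)/P*(x)] ≥ 1 − ((1−α)/α) · Δ · ξ, where Δ = max_{x∈X*} Δ_x, ξ = P₀(X*), and X* is the support of P*'s marginal on X. -/

import Mathlib

open Finset

/-- success lower bound for a Bayes optimal classifier on the mixture:
`S(α) ≥ 1 - ((1-α)/α) E_{x∼P*}[Δ_x P₀(x)/P*(x)] ≥ 1 - ((1-α)/α) Δ ξ`. -/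
theorem stmt8 {X Y : Type*} [Fintype X] [Fintype Y] [DecidableEq X] [DecidableEq Y]
    [Nonempty Y]
    (P0 Pstar : X × Y → ℝ) (α : ℝ) (ystar : Y) (f : X → Y)
    (Xstar : Finset X) (hXne : Xstar.Nonempty)
    (hP0 : ∀ z, 0 ≤ P0 z) (hP0sum : ∑ z, P0 z = 1)
    (hPstar : ∀ z, 0 ≤ Pstar z) (hPstarsum : ∑ z, Pstar z = 1)
    (hα : 0 < α) (hα1 : α < 1)
    (hdet : ∀ x y, y ≠ ystar → Pstar (x, y) = 0)
    -- Xstar is the support of the X-marginal of P*: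
    (hsupp : ∀ x, x ∈ Xstar ↔ (∑ y, Pstar (x, y)) ≠ 0)
    -- f is Bayes optimal on P_α = α P* + (1-α) P₀:
    (hBayes : ∀ x y, α * Pstar (x, y) + (1 - α) * P0 (x, y)
        ≤ α * Pstar (x, f x) + (1 - α) * P0 (x, f x))
    -- the pointwise sub-optimality gap:
    (Δx : X → ℝ)
    (hΔx : ∀ x, Δx x = Finset.univ.sup' Finset.univ_nonempty (fun y : Y =>
        P0 (x, y) / (∑ y', P0 (x, y')) - P0 (x, ystar) / (∑ y', P0 (x, y')))) :
    (∑ x, (∑ y, Pstar (x, y)) * (if f x = ystar then 1 else 0))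
        ≥ 1 - ((1 - α) / α) *
            (∑ x, (∑ y, Pstar (x, y)) * (Δx x * (∑ y, P0 (x, y)) / (∑ y, Pstar (x, y)))) ∧
    1 - ((1 - α) / α) *
        (∑ x, (∑ y, Pstar (x, y)) * (Δx x * (∑ y, P0 (x, y)) / (∑ y, Pstar (x, y))))
      ≥ 1 - ((1 - α) / α) * (Xstar.sup' hXne Δx) * (∑ x ∈ Xstar, ∑ y, P0 (x, y)) := by
  set c := (1 - α) / α with hc
  have hcnn : 0 ≤ c := div_nonneg (by linarith) hα.le
  have hcα : c * α = 1 - α := div_mul_cancel₀ _ hα.ne'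
  have hQ : ∀ x, (∑ y, Pstar (x, y)) = Pstar (x, ystar) := fun x =>
    Fintype.sum_eq_single ystar (fun y hy => hdet x y hy)
  have hQnn : ∀ x, 0 ≤ ∑ y, Pstar (x, y) := fun x =>
    Finset.sum_nonneg fun y _ => hPstar _
  have hP0xnn : ∀ x, 0 ≤ ∑ y, P0 (x, y) := fun x =>
    Finset.sum_nonneg fun y _ => hP0 _
  have hΔnn : ∀ x, 0 ≤ Δx x := by
    intro x
    rw [hΔx]
    have h := Finset.le_sup' (f := fun y : Y =>
      P0 (x, y) / (∑ y', P0 (x, y')) - P0 (x, ystar) / (∑ y', P0 (x, y')))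
      (Finset.mem_univ ystar)
    simpa only [sub_self] using h
  have key : ∀ x, f x ≠ ystar →
      α * (∑ y, Pstar (x, y)) ≤ (1 - α) * (Δx x * (∑ y, P0 (x, y))) := by
    intro x hfx
    have hb := hBayes x ystar
    rw [hdet x (f x) hfx] at hb
    have h1 : α * Pstar (x, ystar) ≤ (1 - α) * (P0 (x, f x) - P0 (x, ystar)) := by
      linarith
    rcases eq_or_lt_of_le (hP0xnn x) with h0 | h0
    · have hz : ∀ y, P0 (x, y) = 0 := by
        intro y
        exact (Finset.sum_eq_zero_iff_of_nonneg (fun y _ => hP0 (x, y))).mp h0.symm y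
          (Finset.mem_univ y)
      rw [hQ, ← h0]
      rw [hz (f x), hz ystar] at h1
      nlinarith
    · have hsup : P0 (x, f x) / (∑ y', P0 (x, y')) - P0 (x, ystar) / (∑ y', P0 (x, y'))
          ≤ Δx x := by
        rw [hΔx]
        exact Finset.le_sup' (f := fun y : Y =>
          P0 (x, y) / (∑ y', P0 (x, y')) - P0 (x, ystar) / (∑ y', P0 (x, y')))
          (Finset.mem_univ (f x))
      rw [div_sub_div_same, div_le_iff₀ h0] at hsup
      rw [hQ]
      nlinarith
  have hmarg : (∑ x, ∑ y, Pstar (x, y)) = 1 := by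
    rw [← hPstarsum, ← Fintype.sum_prod_type]
  constructor
  · have hpt : ∀ x ∈ Finset.univ (α := X),
        (∑ y, Pstar (x, y)) - c * ((∑ y, Pstar (x, y)) *
          (Δx x * (∑ y, P0 (x, y)) / (∑ y, Pstar (x, y))))
        ≤ (∑ y, Pstar (x, y)) * (if f x = ystar then 1 else 0) := by
      intro x _
      rcases eq_or_lt_of_le (hQnn x) with hq | hq
      · rw [← hq]
        simp
      · have hterm : (∑ y, Pstar (x, y)) *
            (Δx x * (∑ y, P0 (x, y)) / (∑ y, Pstar (x, y)))
            = Δx x * (∑ y, P0 (x, y)) := by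
          rw [mul_comm, div_mul_cancel₀ _ hq.ne']
        rw [hterm]
        by_cases hf : f x = ystar
        · rw [if_pos hf, mul_one]
          have : 0 ≤ c * (Δx x * (∑ y, P0 (x, y))) :=
            mul_nonneg hcnn (mul_nonneg (hΔnn x) (hP0xnn x))
          linarith
        · simp only [if_neg hf, mul_zero]
          have hk := key x hf
          nlinarith
    calc (∑ x, (∑ y, Pstar (x, y)) * (if f x = ystar then 1 else 0))
        ≥ ∑ x, ((∑ y, Pstar (x, y)) - c * ((∑ y, Pstar (x, y)) *
            (Δx x * (∑ y, P0 (x, y)) / (∑ y, Pstar (x, y))))) :=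
          Finset.sum_le_sum hpt
      _ = 1 - c * (∑ x, (∑ y, Pstar (x, y)) *
            (Δx x * (∑ y, P0 (x, y)) / (∑ y, Pstar (x, y)))) := by
          rw [Finset.sum_sub_distrib, hmarg, ← Finset.mul_sum]
  · have hA : (∑ x, (∑ y, Pstar (x, y)) * (Δx x * (∑ y, P0 (x, y)) / (∑ y, Pstar (x, y))))
        = ∑ x ∈ Xstar, Δx x * (∑ y, P0 (x, y)) := by
      rw [← Finset.sum_subset (Finset.subset_univ Xstar)]
      · refine Finset.sum_congr rfl fun x hx => ?_
        have hq : (∑ y, Pstar (x, y)) ≠ 0 := (hsupp x).mp hx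
        rw [mul_comm, div_mul_cancel₀ _ hq]
      · intro x _ hx
        have hq : (∑ y, Pstar (x, y)) = 0 := by
          by_contra h
          exact hx ((hsupp x).mpr h)
        rw [hq, zero_mul]
    have hB : (∑ x ∈ Xstar, Δx x * (∑ y, P0 (x, y)))
        ≤ (Xstar.sup' hXne Δx) * (∑ x ∈ Xstar, ∑ y, P0 (x, y)) := by
      rw [Finset.mul_sum]
      exact Finset.sum_le_sum fun x hx =>
        mul_le_mul_of_nonneg_right (Finset.le_sup' Δx hx) (hP0xnn x)
    have : c * (∑ x, (∑ y, Pstar (x, y)) * (Δx x * (∑ y, P0 (x, y)) / (∑ y, Pstar (x, y))))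
        ≤ c * ((Xstar.sup' hXne Δx) * (∑ x ∈ Xstar, ∑ y, P0 (x, y))) := by
      rw [hA]
      exact mul_le_mul_of_nonneg_left hB hcnn
    rw [ge_iff_le, ← mul_assoc] at *
    linarith [this]
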